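/- Let X be a set, F : X → X a map, γ : X → ℝ, and s_n(x) = ∑_{k=0}^{n} γ(F^k x). Assume the sums s_n are uniformly bounded: sup_{n,x} |s_n(x)| < ∞. Define d_N(x) = sup_n (−s_n(F^{N+1} x)) − s_N(x). Then for every x ∈ X the sequence (d_N(x))_{N≥0} is non-increasing and converges as N → ∞ to a function ψ(x) that satisfies the cohomological equation ψ(F x) − ψ(x) = γ(x) for all x ∈ X. -/
import Mathlib


open Filter

/-- If the sums `s_n(x)` are uniformly bounded and
`d_N(x) = sup_n (−s_n(F^{N+1} x)) − s_N(x)`, then for each `x` the sequence `(d_N(x))`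
is non-increasing and converges to a function `ψ` solving the cohomological equation. -/
theorem regularization_tends_to_solution
    {X : Type*} (F : X → X) (γ : X → ℝ)
    (hbdd : ∃ C : ℝ, ∀ (n : ℕ) (x : X), |∑ k ∈ Finset.range (n + 1), γ (F^[k] x)| ≤ C)
    (d : ℕ → X → ℝ)
    (hd : ∀ N x, d N x =
      (⨆ n : ℕ, -(∑ k ∈ Finset.range (n + 1), γ (F^[k] (F^[N + 1] x)))) -
        ∑ k ∈ Finset.range (N + 1), γ (F^[k] x)) :
    (∀ x : X, Antitone fun N => d N x) ∧
    (∃ ψ : X → ℝ, (∀ x : X, Tendsto (fun N => d N x) atTop (nhds (ψ x))) ∧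
      ∀ x : X, ψ (F x) - ψ x = γ x) := by
  
  obtain ⟨C, hC⟩ := hbdd
  set s : ℕ → X → ℝ := fun n x => ∑ k ∈ Finset.range (n + 1), γ (F^[k] x) with hs
  -- boundedness facts
  have hCb : ∀ (n : ℕ) (x : X), -C ≤ -(s n x) ∧ -(s n x) ≤ C := by
    intro n x
    have := abs_le.mp (hC n x)
    constructor <;> linarith [this.1, this.2]
  have hbdd' : ∀ (g : ℕ → ℕ) (x : X), BddAbove (Set.range fun n : ℕ => -(s (g n) x)) := by
    intro g x
    exact ⟨C, by rintro _ ⟨n, rfl⟩; exact (hCb (g n) x).2⟩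
  -- key sum identity
  have hsum : ∀ (N n : ℕ) (x : X), s n (F^[N+1] x) = s (N+1+n) x - s N x := by
    intro N n x
    have h1 : s (N+1+n) x = s N x + s n (F^[N+1] x) := by
      simp only [hs]
      rw [show N+1+n+1 = (N+1)+(n+1) by ring, Finset.sum_range_add]
      congr 1
      refine Finset.sum_congr rfl fun i _ => ?_
      rw [show N+1+i = i+(N+1) by ring, Function.iterate_add_apply]
    linarith
  -- d N x = ⨆ n, -(s (N+1+n) x)
  have hdN : ∀ N x, d N x = ⨆ n : ℕ, -(s (N+1+n) x) := by
    intro N x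
    rw [hd N x]
    have h2 : (fun n : ℕ => -(s n (F^[N+1] x))) = fun n => -(s (N+1+n) x) + s N x := by
      funext n; rw [hsum]; ring
    show (⨆ n : ℕ, -(s n (F^[N+1] x))) - s N x = _
    rw [h2, ← ciSup_add (hbdd' (fun n => N+1+n) x)]
    ring
  -- monotonicity
  have hanti : ∀ x, Antitone fun N => d N x := by
    intro x
    refine antitone_nat_of_succ_le fun N => ?_
    rw [hdN, hdN]
    refine ciSup_le fun n => ?_
    have h3 : -(s (N+1+1+n) x) = -(s (N+1+(n+1)) x) := by congr 2; omega
    rw [h3]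
    exact le_ciSup (hbdd' (fun n => N+1+n) x) (n+1)
  refine ⟨hanti, ?_⟩
  -- lower bound
  have hlb : ∀ N x, -C ≤ d N x := by
    intro N x
    rw [hdN]
    calc -C ≤ -(s (N+1+0) x) := (hCb _ _).1
    _ ≤ _ := le_ciSup (hbdd' (fun n => N+1+n) x) 0
  set ψ : X → ℝ := fun x => ⨅ N : ℕ, d N x with hψ
  have htend : ∀ x, Tendsto (fun N => d N x) atTop (nhds (ψ x)) := by
    intro x
    exact tendsto_atTop_ciInf (hanti x) ⟨-C, by rintro _ ⟨N, rfl⟩; exact hlb N x⟩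
  refine ⟨ψ, htend, fun x => ?_⟩
  -- s m (F x) = s (m+1) x - γ x
  have hFx : ∀ (m : ℕ), s m (F x) = s (m+1) x - γ x := by
    intro m
    have h7 : s (m+1) x = γ x + s m (F x) := by
      simp only [hs]
      rw [Finset.sum_range_succ']
      simp only [Function.iterate_succ_apply, Function.iterate_zero_apply]
      ring
    linarith
  have hshift : ∀ N, d N (F x) = d (N+1) x + γ x := by
    intro N
    rw [hdN, hdN]
    have h4 : (fun n : ℕ => -(s (N+1+n) (F x))) = fun n => -(s (N+1+1+n) x) + γ x := by
      funext n
      rw [hFx (N+1+n), show N+1+n+1 = N+1+1+n by ring]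
      ring
    rw [h4, ← ciSup_add (hbdd' (fun n => N+1+1+n) x)]
  have h5 : Tendsto (fun N => d (N+1) x + γ x) atTop (nhds (ψ x + γ x)) :=
    ((htend x).comp (tendsto_add_atTop_nat 1)).add tendsto_const_nhds
  have h6 : Tendsto (fun N => d N (F x)) atTop (nhds (ψ x + γ x)) := by
    simpa only [hshift] using h5
  have := tendsto_nhds_unique (htend (F x)) h6
  linarith
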